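/- If d* is a per-group-threshold rule with thresholds t_a, t_b and d' is any rule with the same group-wise positive rates, then p(X,Z) restricted to the event {d*=1, d'=0} is almost surely at least t_z within each group z, while p(X,Z) restricted to {d*=0, d'=1} is almost surely at most t_z within each group; hence E[p(X,Z) | d*=1, d'=0, Z=z] ≥ E[p(X,Z) | d*=0, d'=1, Z=z] whenever both events have positive probability. -/

import Mathlib

open MeasureTheory

/-- For the per-group-threshold rule `d*` and any rule `d'`
with the same group-wise positive rates: within each group `z`, on the event
`{d*=1, d'=0}` we have `p(X,Z) ≥ t z` a.s., on `{d*=0, d'=1}` we have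
`p(X,Z) ≤ t z` a.s.; hence
`E[p | d*=1, d'=0, Z=z] ≥ E[p | d*=0, d'=1, Z=z]` whenever both events have
positive probability. -/
theorem threshold_swap_regions_ordered
    {Ω 𝒳 : Type*} [MeasurableSpace Ω] [MeasurableSpace 𝒳]
    (μ : Measure Ω) [IsProbabilityMeasure μ]
    (X : Ω → 𝒳) (Z : Ω → Bool)
    (hX : Measurable X) (hZ : Measurable Z)
    (p : 𝒳 → Bool → ℝ) (hp : ∀ z, Measurable fun x => p x z)
    (hp01 : ∀ x z, p x z ∈ Set.Icc (0 : ℝ) 1)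
    (hZpos : ∀ z, 0 < (μ {ω | Z ω = z}).toReal)
    (t : Bool → ℝ)
    (dstar : 𝒳 → Bool → ℝ)
    (hdstar : ∀ x z, dstar x z = if t z ≤ p x z then 1 else 0)
    (d' : 𝒳 → Bool → ℝ)
    (hd'01 : ∀ x z, d' x z = 0 ∨ d' x z = 1)
    (hd'meas : ∀ z, Measurable fun x => d' x z)
    (hrates : ∀ z,
      (μ ({ω | d' (X ω) (Z ω) = 1} ∩ {ω | Z ω = z})).toReal
        = (μ ({ω | dstar (X ω) (Z ω) = 1} ∩ {ω | Z ω = z})).toReal) :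
    ∀ z : Bool,
      (∀ᵐ ω ∂μ, (dstar (X ω) (Z ω) = 1 ∧ d' (X ω) (Z ω) = 0 ∧ Z ω = z) →
        t z ≤ p (X ω) (Z ω)) ∧
      (∀ᵐ ω ∂μ, (dstar (X ω) (Z ω) = 0 ∧ d' (X ω) (Z ω) = 1 ∧ Z ω = z) →
        p (X ω) (Z ω) ≤ t z) ∧
      (μ {ω | dstar (X ω) (Z ω) = 1 ∧ d' (X ω) (Z ω) = 0 ∧ Z ω = z} ≠ 0 →
       μ {ω | dstar (X ω) (Z ω) = 0 ∧ d' (X ω) (Z ω) = 1 ∧ Z ω = z} ≠ 0 →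
        (∫ ω in {ω | dstar (X ω) (Z ω) = 0 ∧ d' (X ω) (Z ω) = 1 ∧ Z ω = z},
            p (X ω) (Z ω) ∂μ)
          / (μ {ω | dstar (X ω) (Z ω) = 0 ∧ d' (X ω) (Z ω) = 1 ∧ Z ω = z}).toReal
        ≤ (∫ ω in {ω | dstar (X ω) (Z ω) = 1 ∧ d' (X ω) (Z ω) = 0 ∧ Z ω = z},
            p (X ω) (Z ω) ∂μ)
          / (μ {ω | dstar (X ω) (Z ω) = 1 ∧ d' (X ω) (Z ω) = 0 ∧ Z ω = z}).toReal) := by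
  intro z
  -- pointwise facts
  have hA : ∀ ω, (dstar (X ω) (Z ω) = 1 ∧ d' (X ω) (Z ω) = 0 ∧ Z ω = z) →
      t z ≤ p (X ω) (Z ω) := by
    intro ω ⟨h1, _, hz⟩
    subst hz
    rw [hdstar] at h1
    by_contra h
    simp [h] at h1
  have hB : ∀ ω, (dstar (X ω) (Z ω) = 0 ∧ d' (X ω) (Z ω) = 1 ∧ Z ω = z) →
      p (X ω) (Z ω) ≤ t z := by
    intro ω ⟨h1, _, hz⟩
    subst hz
    rw [hdstar] at h1
    by_contra h
    push_neg at h
    simp [h.le] at h1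
  refine ⟨ae_of_all _ hA, ae_of_all _ hB, ?_⟩
  intro hAne hBne
  set A := {ω | dstar (X ω) (Z ω) = 1 ∧ d' (X ω) (Z ω) = 0 ∧ Z ω = z} with hAdef
  set B := {ω | dstar (X ω) (Z ω) = 0 ∧ d' (X ω) (Z ω) = 1 ∧ Z ω = z} with hBdef
  have hg : Measurable fun ω => p (X ω) (Z ω) := by
    have : (fun ω => p (X ω) (Z ω)) =
        fun ω => if Z ω = true then p (X ω) true else p (X ω) false := by
      funext ω; cases hzz : Z ω <;> simp
    rw [this]
    exact Measurable.ite (hZ (MeasurableSet.singleton true))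
      ((hp true).comp hX) ((hp false).comp hX)
  have hdsm : Measurable fun ω => dstar (X ω) (Z ω) := by
    have : (fun ω => dstar (X ω) (Z ω)) =
        fun ω => if Z ω = true then dstar (X ω) true else dstar (X ω) false := by
      funext ω; cases hzz : Z ω <;> simp
    rw [this]
    have hm : ∀ w, Measurable fun x => dstar x w := by
      intro w
      have : (fun x => dstar x w) = fun x => if t w ≤ p x w then (1:ℝ) else 0 := by
        funext x; exact hdstar x w
      rw [this]
      exact Measurable.ite (measurableSet_le measurable_const (hp w))
        measurable_const measurable_const
    exact Measurable.ite (hZ (MeasurableSet.singleton true))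
      ((hm true).comp hX) ((hm false).comp hX)
  have hd'm : Measurable fun ω => d' (X ω) (Z ω) := by
    have : (fun ω => d' (X ω) (Z ω)) =
        fun ω => if Z ω = true then d' (X ω) true else d' (X ω) false := by
      funext ω; cases hzz : Z ω <;> simp
    rw [this]
    exact Measurable.ite (hZ (MeasurableSet.singleton true))
      ((hd'meas true).comp hX) ((hd'meas false).comp hX)
  have hAm : MeasurableSet A := by
    have : A = (fun ω => dstar (X ω) (Z ω)) ⁻¹' {1} ∩
        ((fun ω => d' (X ω) (Z ω)) ⁻¹' {0} ∩ Z ⁻¹' {z}) := by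
      ext ω; simp [hAdef, Set.mem_setOf_eq, and_assoc]
    rw [this]
    exact (hdsm (MeasurableSet.singleton 1)).inter
      ((hd'm (MeasurableSet.singleton 0)).inter (hZ (MeasurableSet.singleton z)))
  have hBm : MeasurableSet B := by
    have : B = (fun ω => dstar (X ω) (Z ω)) ⁻¹' {0} ∩
        ((fun ω => d' (X ω) (Z ω)) ⁻¹' {1} ∩ Z ⁻¹' {z}) := by
      ext ω; simp [hBdef, Set.mem_setOf_eq, and_assoc]
    rw [this]
    exact (hdsm (MeasurableSet.singleton 0)).inter
      ((hd'm (MeasurableSet.singleton 1)).inter (hZ (MeasurableSet.singleton z)))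
  have hgint : Integrable (fun ω => p (X ω) (Z ω)) μ := by
    refine ⟨hg.aestronglyMeasurable, HasFiniteIntegral.of_bounded (C := 1) ?_⟩
    refine ae_of_all _ fun ω => ?_
    have h01 := hp01 (X ω) (Z ω)
    rw [Real.norm_eq_abs, abs_le]
    constructor <;> linarith [h01.1, h01.2]
  have hAfin : μ A ≠ ⊤ := (measure_lt_top μ A).ne
  have hBfin : μ B ≠ ⊤ := (measure_lt_top μ B).ne
  have hApos : 0 < (μ A).toReal :=
    ENNReal.toReal_pos hAne hAfin
  have hBpos : 0 < (μ B).toReal :=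
    ENNReal.toReal_pos hBne hBfin
  have hlow : t z * (μ A).toReal ≤ ∫ ω in A, p (X ω) (Z ω) ∂μ :=
    by simpa [measureReal_def, smul_eq_mul, mul_comm] using
      setIntegral_ge_of_const_le hAm hAfin (fun ω hω => hA ω hω) hgint.integrableOn
  have hupp : (∫ ω in B, p (X ω) (Z ω) ∂μ) ≤ t z * (μ B).toReal := by
    have := setIntegral_mono_on (f := fun ω => p (X ω) (Z ω)) (g := fun _ => t z)
      hgint.integrableOn (integrableOn_const hBfin) hBm
      (fun ω hω => hB ω hω)
    simpa [setIntegral_const, smul_eq_mul, mul_comm, measureReal_def] using this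
  rw [div_le_div_iff₀ hBpos hApos]
  calc (∫ ω in B, p (X ω) (Z ω) ∂μ) * (μ A).toReal
      ≤ t z * (μ B).toReal * (μ A).toReal := by
        exact mul_le_mul_of_nonneg_right hupp hApos.le
    _ = (t z * (μ A).toReal) * (μ B).toReal := by ring
    _ ≤ (∫ ω in A, p (X ω) (Z ω) ∂μ) * (μ B).toReal :=
        mul_le_mul_of_nonneg_right hlow hBpos.le
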